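/- In the transductive multi-task setting with n tasks and m samples per task, fix a hyper-prior 𝒫 ∈ M(M(ℱ)) and a loss ℓ: 𝒴×𝒴 → [0,1]. Let 𝔓 be the distribution on M(ℱ) × ℱ^n obtained by sampling P ∼ 𝒫 and then f_1,…,f_n i.i.d. from P, independently of the datasets S_1,…,S_n. Then for every λ > 0: E_{S_1,…,S_n} E_{(P, f_1,…,f_n) ∼ 𝔓} ∏_{i=1}^n exp( (λ/n) · Δ_i(f_i) ) ≤ exp( λ² / (8 n m) ), where Δ_i(f) = E_{(x,y)∼D_i} ℓ(y, f(x)) − (1/m) Σ_{j=1}^m ℓ(y_i^j, f(x_i^j)). -/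

import Mathlib

open MeasureTheory
open scoped ENNReal

/-- The canonical σ-algebra on the space of probability measures, induced from the
σ-algebra on measures generated by the evaluation maps. -/
instance {Ω : Type*} [MeasurableSpace Ω] : MeasurableSpace (ProbabilityMeasure Ω) :=
  MeasurableSpace.comap ProbabilityMeasure.toMeasure inferInstance


section Aux

lemma hoeffding_core (p : ℝ) (hp0 : 0 ≤ p) (hp1 : p ≤ 1) (s : ℝ) :
    -(p*s) + Real.log (1 - p + p * Real.exp s) ≤ s^2/8 := by
  set d : ℝ → ℝ := fun x => 1 - p + p * Real.exp x with hd_def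
  have hd : ∀ x, 0 < d x := by
    intro x
    rcases eq_or_lt_of_le hp0 with h | h
    · simp [hd_def, ← h]
    · have h2 : 0 < p * Real.exp x := mul_pos h (Real.exp_pos x)
      have : (0:ℝ) ≤ 1 - p := by linarith
      simp only [hd_def]; linarith
  have hdd : ∀ x, HasDerivAt d (p * Real.exp x) x := fun x => by
    exact ((Real.hasDerivAt_exp x).const_mul p).const_add (1 - p)
  set f : ℝ → ℝ := fun x => x^2/8 + p*x - Real.log (d x) with hf_def
  set f' : ℝ → ℝ := fun x => x/4 + p - p * Real.exp x / d x with hf'_def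
  have hf : ∀ x, HasDerivAt f (f' x) x := by
    intro x
    have hlog : HasDerivAt (fun y => Real.log (d y)) (p * Real.exp x / d x) x :=
      (hdd x).log (hd x).ne'
    have h1 : HasDerivAt (fun y : ℝ => y^2/8 + p*y) (x/4 + p) x := by
      have := ((hasDerivAt_pow 2 x).div_const 8).add ((hasDerivAt_id x).const_mul p)
      refine this.congr_deriv ?_
      simp; ring
    exact h1.sub hlog
  have hf' : ∀ x, HasDerivAt f' (1/4 - (1-p) * (p * Real.exp x) / (d x)^2) x := by
    intro x
    have hq : HasDerivAt (fun y => p * Real.exp y / d y)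
        ((p * Real.exp x * d x - p * Real.exp x * (p * Real.exp x)) / (d x)^2) x :=
      ((Real.hasDerivAt_exp x).const_mul p).div (hdd x) (hd x).ne'
    have h1 : HasDerivAt (fun y : ℝ => y/4 + p) (1/4) x := by
      simpa using ((hasDerivAt_id x).div_const 4).add_const p
    have h2 := h1.sub hq
    refine h2.congr_deriv ?_
    have hdx := (hd x).ne'
    have hde : d x = 1 - p + p * Real.exp x := rfl
    rw [show p * Real.exp x * d x - p * Real.exp x * (p * Real.exp x) = (1-p) * (p * Real.exp x) by rw [hde]; ring]
  have hf''_nonneg : ∀ x, 0 ≤ 1/4 - (1-p) * (p * Real.exp x) / (d x)^2 := by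
    intro x
    have h2 : (0:ℝ) < (d x)^2 := pow_pos (hd x) 2
    rw [sub_nonneg, div_le_iff₀ h2]
    have hde : d x = 1 - p + p * Real.exp x := rfl
    nlinarith [sq_nonneg ((1-p) - p * Real.exp x)]
  have hmono : Monotone f' :=
    monotone_of_deriv_nonneg (fun x => (hf' x).differentiableAt)
      (fun x => by rw [(hf' x).deriv]; exact hf''_nonneg x)
  have hf'0 : f' 0 = 0 := by
    have : d 0 = 1 := by simp [hd_def]
    simp [hf'_def, this]
  have hf0 : f 0 = 0 := by
    have : d 0 = 1 := by simp [hd_def]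
    simp [hf_def, this]
  have hdiff : Differentiable ℝ f := fun x => (hf x).differentiableAt
  have key : 0 ≤ f s := by
    rcases le_total 0 s with hs | hs
    · have hmon : MonotoneOn f (Set.Ici 0) := by
        refine monotoneOn_of_deriv_nonneg (convex_Ici 0) hdiff.continuous.continuousOn
          hdiff.differentiableOn ?_
        intro x hx
        rw [interior_Ici] at hx
        rw [(hf x).deriv]
        have : f' 0 ≤ f' x := hmono (le_of_lt hx)
        linarith [hf'0 ▸ this]
      have := hmon (Set.self_mem_Ici) hs hs
      linarith [hf0 ▸ this]
    · have hmon : AntitoneOn f (Set.Iic 0) := by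
        refine antitoneOn_of_deriv_nonpos (convex_Iic 0) hdiff.continuous.continuousOn
          hdiff.differentiableOn ?_
        intro x hx
        rw [interior_Iic] at hx
        rw [(hf x).deriv]
        have : f' x ≤ f' 0 := hmono (le_of_lt hx)
        linarith [hf'0 ▸ this]
      have := hmon hs (Set.self_mem_Iic) hs
      linarith [hf0 ▸ this]
  have hfs : f s = s^2/8 + p*s - Real.log (d s) := rfl
  have hlog : Real.log (1 - p + p * Real.exp s) = Real.log (d s) := rfl
  rw [hlog]
  have key2 : 0 ≤ s^2/8 + p*s - Real.log (d s) := hfs ▸ key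
  linarith [key2]


lemma hoeffding_chord (p t : ℝ) (hp0 : 0 ≤ p) (hp1 : p ≤ 1) :
    p * Real.exp (t*(p-1)) + (1-p) * Real.exp (t*p) ≤ Real.exp (t^2/8) := by
  have hd : 0 < 1 - p + p * Real.exp (-t) := by
    rcases eq_or_lt_of_le hp0 with h | h
    · simp [← h]
    · have h2 : 0 < p * Real.exp (-t) := mul_pos h (Real.exp_pos _)
      linarith
  have h := hoeffding_core p hp0 hp1 (-t)
  have heq : p * Real.exp (t*(p-1)) + (1-p) * Real.exp (t*p)
      = Real.exp (-(p*(-t)) + Real.log (1 - p + p * Real.exp (-t))) := by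
    rw [Real.exp_add, Real.exp_log hd]
    have e1 : Real.exp (t*(p-1)) = Real.exp (-(p*(-t))) * Real.exp (-t) := by
      rw [← Real.exp_add]; ring_nf
    have e2 : Real.exp (t*p) = Real.exp (-(p*(-t))) := by ring_nf
    rw [e1, e2]; ring
  rw [heq]
  have h2 := Real.exp_le_exp.2 h
  simpa [neg_sq] using h2

lemma hoeffding_single {Z : Type*} [MeasurableSpace Z] (μ : Measure Z) [IsProbabilityMeasure μ]
    (X : Z → ℝ) (hX : Measurable X) (hX01 : ∀ z, X z ∈ Set.Icc (0:ℝ) 1) (t : ℝ) :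
    ∫ z, Real.exp (t * ((∫ w, X w ∂μ) - X z)) ∂μ ≤ Real.exp (t^2/8) := by
  set c := ∫ w, X w ∂μ with hc_def
  have hXint : Integrable X μ :=
    (integrable_const (1:ℝ)).mono' hX.aestronglyMeasurable
      (Filter.Eventually.of_forall fun z => by
        rw [Real.norm_eq_abs, abs_of_nonneg (hX01 z).1]; exact (hX01 z).2)
  have hc0 : 0 ≤ c := integral_nonneg fun z => (hX01 z).1
  have hc1 : c ≤ 1 := by
    have := integral_mono hXint (integrable_const (1:ℝ)) (fun z => (hX01 z).2)
    simpa using this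
  have hpt : ∀ z, Real.exp (t * (c - X z))
      ≤ X z * Real.exp (t*(c-1)) + (1 - X z) * Real.exp (t*c) := by
    intro z
    have hcx := hX01 z
    have hconv := convexOn_exp.2 (Set.mem_univ (t*(c-1))) (Set.mem_univ (t*c))
      hcx.1 (sub_nonneg.2 hcx.2) (by ring)
    simp only [smul_eq_mul] at hconv
    have harg : X z * (t*(c-1)) + (1 - X z) * (t*c) = t * (c - X z) := by ring
    rwa [harg] at hconv
  have hmeas1 : Measurable fun z => Real.exp (t * (c - X z)) :=
    ((hX.const_sub c).const_mul t).exp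
  have hint1 : Integrable (fun z => Real.exp (t * (c - X z))) μ := by
    refine (integrable_const (Real.exp |t|)).mono' hmeas1.aestronglyMeasurable
      (Filter.Eventually.of_forall fun z => ?_)
    rw [Real.norm_eq_abs, abs_of_nonneg (Real.exp_pos _).le]
    apply Real.exp_le_exp.2
    have h1 := (hX01 z).1; have h2 := (hX01 z).2
    calc t * (c - X z) ≤ |t * (c - X z)| := le_abs_self _
      _ = |t| * |c - X z| := abs_mul _ _
      _ ≤ |t| * 1 := by
          apply mul_le_mul_of_nonneg_left _ (abs_nonneg t)
          rw [abs_le]; constructor <;> nlinarith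
      _ = |t| := mul_one _
  have hsub : Integrable (fun z => 1 - X z) μ := (integrable_const (1:ℝ)).sub hXint
  have hint2 : Integrable (fun z => X z * Real.exp (t*(c-1)) + (1 - X z) * Real.exp (t*c)) μ :=
    (hXint.mul_const _).add (hsub.mul_const _)
  have hR : ∫ z, (X z * Real.exp (t*(c-1)) + (1 - X z) * Real.exp (t*c)) ∂μ
      = c * Real.exp (t*(c-1)) + (1-c) * Real.exp (t*c) := by
    rw [integral_add (hXint.mul_const _) (hsub.mul_const _),
        integral_mul_const, integral_mul_const,
        integral_sub (integrable_const (1:ℝ)) hXint]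
    simp [hc_def]
  calc ∫ z, Real.exp (t * (c - X z)) ∂μ
      ≤ ∫ z, (X z * Real.exp (t*(c-1)) + (1 - X z) * Real.exp (t*c)) ∂μ :=
        integral_mono hint1 hint2 hpt
    _ = c * Real.exp (t*(c-1)) + (1-c) * Real.exp (t*c) := hR
    _ ≤ Real.exp (t^2/8) := hoeffding_chord c t hc0 hc1


lemma integral_pi_prod {ι : Type*} [Fintype ι] {α : ι → Type*} [∀ i, MeasurableSpace (α i)]
    (μ : ∀ i, Measure (α i)) [∀ i, SigmaFinite (μ i)] (f : ∀ i, α i → ℝ) :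
    ∫ x : ∀ i, α i, ∏ i, f i (x i) ∂(Measure.pi μ) = ∏ i, ∫ x, f i x ∂(μ i) := by
  letI : ∀ i, MeasureSpace (α i) := fun i => ⟨μ i⟩
  exact MeasureTheory.integral_fintype_prod_eq_prod f

lemma measurable_pi_measure {α : Type*} [MeasurableSpace α] {ι : Type*} [Fintype ι]
    {β : ι → Type*} [∀ i, MeasurableSpace (β i)]
    (μ : ∀ i, α → Measure (β i)) (hμ : ∀ i, Measurable (μ i))
    (hprob : ∀ i a, IsProbabilityMeasure (μ i a)) :
    Measurable fun a => Measure.pi (fun i => μ i a) := by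
  apply Measure.measurable_of_measurable_coe
  have key : ∀ ⦃s : Set (∀ i, β i)⦄, MeasurableSet s →
      Measurable (fun a => Measure.pi (fun i => μ i a) s) := by
    refine MeasurableSpace.induction_on_inter generateFrom_pi.symm isPiSystem_pi ?_ ?_ ?_ ?_
    · simp only [measure_empty]; exact measurable_const
    · rintro _ ⟨s, hsm, rfl⟩
      have heq : ∀ a, Measure.pi (fun i => μ i a) (Set.pi Set.univ s) = ∏ i, μ i a (s i) := by
        intro a
        haveI := fun i => hprob i a
        exact Measure.pi_pi _ _
      simp_rw [heq]
      exact Finset.measurable_prod _ fun i _ =>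
        (Measure.measurable_coe (hsm i (Set.mem_univ i))).comp (hμ i)
    · intro t htm hrec
      have heq : ∀ a, Measure.pi (fun i => μ i a) tᶜ = 1 - Measure.pi (fun i => μ i a) t := by
        intro a
        haveI := fun i => hprob i a
        haveI : IsProbabilityMeasure (Measure.pi fun i => μ i a) := by infer_instance
        rw [measure_compl htm (measure_ne_top _ t), measure_univ]
      simp_rw [heq]
      exact measurable_const.sub hrec
    · intro g hdis hgm hrec
      have heq : ∀ a, Measure.pi (fun i => μ i a) (⋃ k, g k) = ∑' k, Measure.pi (fun i => μ i a) (g k) :=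
        fun a => measure_iUnion hdis hgm
      simp_rw [heq]
      exact Measurable.ennreal_tsum hrec
  exact fun s hs => key hs

end Aux

/-- in the transductive multi-task setting with `n` tasks and `m` samples per
task, for a hyper-prior `Pri ∈ M(M(ℱ))` and the data-independent distribution `𝔓` on
`M(ℱ) × ℱⁿ` obtained by sampling `P ∼ Pri` and then `f₁,…,fₙ` i.i.d. from `P`, we have for all
`λ > 0`:
`E_{S₁,…,Sₙ} E_{(P,f₁,…,fₙ)∼𝔓} ∏ᵢ exp((λ/n)·Δᵢ(fᵢ)) ≤ exp(λ²/(8 n m))`,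
where `Δᵢ(f) = E_{(x,y)∼Dᵢ} ℓ(y, f(x)) − (1/m) Σⱼ ℓ(yᵢʲ, f(xᵢʲ))`. -/
theorem exp_moment_multitask_le
    {𝒳 𝒴 F : Type*} [MeasurableSpace 𝒳] [MeasurableSpace 𝒴] [MeasurableSpace F]
    (app : F → 𝒳 → 𝒴) (happ : Measurable (Function.uncurry app))
    (ℓ : 𝒴 → 𝒴 → ℝ) (hℓmeas : Measurable (Function.uncurry ℓ))
    (hℓ : ∀ y y', ℓ y y' ∈ Set.Icc (0 : ℝ) 1)
    (n m : ℕ) (hn : 1 ≤ n) (hm : 1 ≤ m)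
    (D : Fin n → Measure (𝒳 × 𝒴)) (hD : ∀ i, IsProbabilityMeasure (D i))
    (Pri : Measure (ProbabilityMeasure F)) [IsProbabilityMeasure Pri]
    (lam : ℝ) (hlam : 0 < lam) :
    (∫ S : Fin n → Fin m → 𝒳 × 𝒴,
        ∫ pf : ProbabilityMeasure F × (Fin n → F),
          ∏ i, Real.exp ((lam / n) *
            ((∫ z, ℓ z.2 (app (pf.2 i) z.1) ∂(D i))
              - (1 / m : ℝ) * ∑ j, ℓ (S i j).2 (app (pf.2 i) (S i j).1)))
        ∂(Pri.bind fun P => (Measure.dirac P).prod (Measure.pi fun _ : Fin n => (P : Measure F)))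
      ∂(Measure.pi fun i : Fin n => Measure.pi fun _ : Fin m => D i))
      ≤ Real.exp (lam ^ 2 / (8 * n * m)) := by
  haveI hDinst : ∀ i, IsProbabilityMeasure (D i) := hD
  have hn' : (0:ℝ) < n := by exact_mod_cast Nat.pos_of_ne_zero (by omega)
  have hm' : (0:ℝ) < m := by exact_mod_cast Nat.pos_of_ne_zero (by omega)
  set g : F → 𝒳 × 𝒴 → ℝ := fun f z => ℓ z.2 (app f z.1) with hg_def
  have hg : Measurable (fun q : F × (𝒳 × 𝒴) => g q.1 q.2) :=
    hℓmeas.comp ((measurable_snd.snd).prodMk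
      (happ.comp (measurable_fst.prodMk measurable_snd.fst)))
  have hgf : ∀ f, Measurable (g f) := fun f => hg.comp measurable_prodMk_left
  have hg01 : ∀ f z, g f z ∈ Set.Icc (0:ℝ) 1 := fun f z => hℓ _ _
  set I : Fin n → F → ℝ := fun i f => ∫ z, g f z ∂(D i) with hI_def
  have hI : ∀ i, Measurable (I i) := fun i =>
    (hg.stronglyMeasurable.integral_prod_right').measurable
  have hgint : ∀ (i : Fin n) f, Integrable (g f) (D i) := fun i f =>
    (integrable_const (1:ℝ)).mono' (hgf f).aestronglyMeasurable
      (Filter.Eventually.of_forall fun z => by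
        rw [Real.norm_eq_abs, abs_of_nonneg (hg01 f z).1]; exact (hg01 f z).2)
  have hI01 : ∀ i f, I i f ∈ Set.Icc (0:ℝ) 1 := by
    intro i f
    constructor
    · exact integral_nonneg fun z => (hg01 f z).1
    · have := integral_mono (hgint i f) (integrable_const (1:ℝ)) fun z => (hg01 f z).2
      simpa using this
  set κmap : ProbabilityMeasure F → Measure (ProbabilityMeasure F × (Fin n → F)) :=
    fun P => (Measure.dirac P).prod (Measure.pi fun _ : Fin n => (P : Measure F)) with hκmap_def
  have hcoe : Measurable (fun P : ProbabilityMeasure F => (P : Measure F)) :=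
    measurable_iff_comap_le.mpr le_rfl
  have hpiP : Measurable (fun P : ProbabilityMeasure F =>
      Measure.pi (fun _ : Fin n => (P : Measure F))) :=
    measurable_pi_measure (β := fun _ : Fin n => F)
      (fun (_ : Fin n) (P : ProbabilityMeasure F) => (P : Measure F))
      (fun _ => hcoe) (fun _ P => P.prop)
  let κpi : ProbabilityTheory.Kernel (ProbabilityMeasure F) (Fin n → F) :=
    { toFun := fun P => Measure.pi (fun _ : Fin n => (P : Measure F)),
      measurable' := hpiP }
  haveI : ProbabilityTheory.IsMarkovKernel κpi := by
    constructor
    intro P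
    show IsProbabilityMeasure (Measure.pi (fun _ : Fin n => (P : Measure F)))
    infer_instance
  let κdir : ProbabilityTheory.Kernel (ProbabilityMeasure F) (ProbabilityMeasure F) :=
    ProbabilityTheory.Kernel.deterministic id measurable_id
  have hker : ∀ P, (κdir.prod κpi) P = κmap P := by
    intro P
    rw [ProbabilityTheory.Kernel.prod_apply, ProbabilityTheory.Kernel.deterministic_apply]
    rfl
  have hκ : Measurable κmap := by
    have h := (κdir.prod κpi).measurable
    have he : ⇑(κdir.prod κpi) = κmap := funext hker
    rwa [he] at h
  haveI h𝔓 : IsProbabilityMeasure (Pri.bind κmap) := by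
    constructor
    rw [Measure.bind_apply MeasurableSet.univ hκ.aemeasurable]
    have huniv : ∀ P, κmap P Set.univ = 1 := by
      intro P
      haveI : IsProbabilityMeasure (κmap P) := by
        show IsProbabilityMeasure
          ((Measure.dirac P).prod (Measure.pi fun _ : Fin n => (P : Measure F)))
        infer_instance
      exact measure_univ
    simp_rw [huniv]
    simp
  set MS : Measure (Fin n → Fin m → 𝒳 × 𝒴) :=
    Measure.pi fun i : Fin n => Measure.pi fun _ : Fin m => D i with hMS_def
  haveI : IsProbabilityMeasure MS := by rw [hMS_def]; infer_instance
  set H : (Fin n → Fin m → 𝒳 × 𝒴) → ProbabilityMeasure F × (Fin n → F) → ℝ :=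
    fun S pf => ∏ i, Real.exp ((lam / n) *
      (I i (pf.2 i) - (1 / m : ℝ) * ∑ j, g (pf.2 i) (S i j))) with hH_def
  show (∫ S, ∫ pf, H S pf ∂(Pri.bind κmap) ∂MS) ≤ Real.exp (lam ^ 2 / (8 * n * m))
  have hHmeas : Measurable (Function.uncurry H) := by
    apply Finset.measurable_prod
    intro i _
    have hA : Measurable (fun w : (Fin n → Fin m → 𝒳 × 𝒴) ×
        (ProbabilityMeasure F × (Fin n → F)) => I i (w.2.2 i)) :=
      (hI i).comp ((measurable_pi_apply i).comp (measurable_snd.snd))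
    have hB : ∀ j : Fin m, Measurable (fun w : (Fin n → Fin m → 𝒳 × 𝒴) ×
        (ProbabilityMeasure F × (Fin n → F)) => g (w.2.2 i) (w.1 i j)) := by
      intro j
      have h1 : Measurable (fun w : (Fin n → Fin m → 𝒳 × 𝒴) ×
          (ProbabilityMeasure F × (Fin n → F)) => (w.2.2 i, w.1 i j)) :=
        ((measurable_pi_apply i).comp (measurable_snd.snd)).prodMk
          ((measurable_pi_apply j).comp ((measurable_pi_apply i).comp measurable_fst))
      exact hg.comp h1
    exact (((hA.sub ((Finset.measurable_sum Finset.univ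
      (fun j _ => hB j)).const_mul _)).const_mul _)).exp
  have hHnonneg : ∀ S pf, 0 ≤ H S pf :=
    fun S pf => Finset.prod_nonneg fun i _ => (Real.exp_pos _).le
  have hHbound : ∀ S pf, ‖H S pf‖ ≤ Real.exp lam := by
    intro S pf
    rw [Real.norm_eq_abs, abs_of_nonneg (hHnonneg S pf)]
    have hstep : H S pf ≤ ∏ _i : Fin n, Real.exp (lam / n) := by
      refine Finset.prod_le_prod (fun i _ => (Real.exp_pos _).le) (fun i _ => ?_)
      apply Real.exp_le_exp.2
      have h1 := hI01 i (pf.2 i)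
      have havg : 0 ≤ (1/m : ℝ) * ∑ j, g (pf.2 i) (S i j) :=
        mul_nonneg (by positivity) (Finset.sum_nonneg fun j _ => (hg01 _ _).1)
      have hle : I i (pf.2 i) - (1/m : ℝ) * ∑ j, g (pf.2 i) (S i j) ≤ 1 := by
        linarith [h1.2]
      calc (lam / n) * (I i (pf.2 i) - (1/m : ℝ) * ∑ j, g (pf.2 i) (S i j))
          ≤ (lam / n) * 1 := mul_le_mul_of_nonneg_left hle (by positivity)
        _ = lam / n := mul_one _
    refine hstep.trans ?_
    rw [Finset.prod_const, Finset.card_univ, Fintype.card_fin, ← Real.exp_nat_mul]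
    apply le_of_eq
    congr 1
    field_simp
  have hint : Integrable (Function.uncurry H) (MS.prod (Pri.bind κmap)) :=
    (integrable_const (Real.exp lam)).mono' hHmeas.aestronglyMeasurable
      (Filter.Eventually.of_forall fun w => hHbound w.1 w.2)
  rw [MeasureTheory.integral_integral_swap hint]
  have hpf : ∀ pf : ProbabilityMeasure F × (Fin n → F),
      ∫ S, H S pf ∂MS ≤ Real.exp (lam^2/(8*n*m)) := by
    intro pf
    set t : ℝ := lam / (n*m) with ht_def
    have hprod : ∫ S, H S pf ∂MS
        = ∏ i, ∫ s : Fin m → 𝒳 × 𝒴, Real.exp ((lam / n) *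
            (I i (pf.2 i) - (1/m : ℝ) * ∑ j, g (pf.2 i) (s j)))
          ∂(Measure.pi fun _ : Fin m => D i) :=
      integral_pi_prod (fun i => Measure.pi fun _ : Fin m => D i)
        (fun i s => Real.exp ((lam / n) *
          (I i (pf.2 i) - (1/m : ℝ) * ∑ j, g (pf.2 i) (s j))))
    have hfac : ∀ i : Fin n,
        ∫ s : Fin m → 𝒳 × 𝒴, Real.exp ((lam / n) *
            (I i (pf.2 i) - (1/m : ℝ) * ∑ j, g (pf.2 i) (s j)))
          ∂(Measure.pi fun _ : Fin m => D i) ≤ Real.exp (lam^2/(8*(n:ℝ)^2*m)) := by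
      intro i
      have hrw : ∀ s : Fin m → 𝒳 × 𝒴,
          Real.exp ((lam/n) * (I i (pf.2 i) - (1/m:ℝ) * ∑ j, g (pf.2 i) (s j)))
          = ∏ j, Real.exp (t * (I i (pf.2 i) - g (pf.2 i) (s j))) := by
        intro s
        rw [← Real.exp_sum]
        congr 1
        have hsum : ∑ j : Fin m, t * (I i (pf.2 i) - g (pf.2 i) (s j))
            = (lam / n) * (I i (pf.2 i) - (1/m:ℝ) * ∑ j, g (pf.2 i) (s j)) := by
          simp only [mul_sub, Finset.sum_sub_distrib, Finset.sum_const, Finset.card_univ,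
            Fintype.card_fin, nsmul_eq_mul, ← Finset.mul_sum, ht_def]
          field_simp
        rw [hsum]
      simp_rw [hrw]
      have hhoef := hoeffding_single (D i) (g (pf.2 i)) (hgf (pf.2 i)) (hg01 _) t
      have hpi : ∫ s : Fin m → 𝒳 × 𝒴,
          ∏ j, Real.exp (t * (I i (pf.2 i) - g (pf.2 i) (s j)))
          ∂(Measure.pi fun _ : Fin m => D i)
          = (∫ z, Real.exp (t * (I i (pf.2 i) - g (pf.2 i) z)) ∂(D i)) ^ m := by
        rw [integral_pi_prod (fun _ : Fin m => D i)
          (fun _ z => Real.exp (t * (I i (pf.2 i) - g (pf.2 i) z)))]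
        rw [Finset.prod_const, Finset.card_univ, Fintype.card_fin]
      rw [hpi]
      calc (∫ z, Real.exp (t * (I i (pf.2 i) - g (pf.2 i) z)) ∂(D i)) ^ m
          ≤ (Real.exp (t^2/8)) ^ m :=
            pow_le_pow_left₀ (integral_nonneg fun z => (Real.exp_pos _).le) hhoef m
        _ = Real.exp (lam^2/(8*(n:ℝ)^2*m)) := by
            rw [← Real.exp_nat_mul]
            congr 1
            rw [ht_def]
            field_simp
    rw [hprod]
    calc ∏ i, ∫ s : Fin m → 𝒳 × 𝒴, Real.exp ((lam / n) *
            (I i (pf.2 i) - (1/m : ℝ) * ∑ j, g (pf.2 i) (s j)))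
          ∂(Measure.pi fun _ : Fin m => D i)
        ≤ ∏ _i : Fin n, Real.exp (lam^2/(8*(n:ℝ)^2*m)) :=
          Finset.prod_le_prod (fun i _ => integral_nonneg fun s => (Real.exp_pos _).le)
            (fun i _ => hfac i)
      _ = Real.exp (lam^2/(8*n*m)) := by
          rw [Finset.prod_const, Finset.card_univ, Fintype.card_fin, ← Real.exp_nat_mul]
          congr 1
          field_simp
  calc ∫ pf, ∫ S, H S pf ∂MS ∂(Pri.bind κmap)
      ≤ ∫ _pf, Real.exp (lam^2/(8*n*m)) ∂(Pri.bind κmap) := by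
        refine integral_mono_of_nonneg ?_ (integrable_const _)
          (Filter.Eventually.of_forall hpf)
        exact Filter.Eventually.of_forall fun pf => integral_nonneg fun S => hHnonneg S pf
    _ = Real.exp (lam^2/(8*n*m)) := by simp
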